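/- For every graph G in S_k^{(2)}(n) ∪ T_k^{(2)}(n) with n ≥ k^4 + 5k^3 + 2k^2 + 8k + 12 and k ≥ 2, the signless Laplacian spectral radius satisfies q(G) > 2n − 2k − 1. -/

import Mathlib

open Classical SimpleGraph

noncomputable section

/-- Degree of a vertex (via `Set.ncard`, avoiding decidability assumptions). -/
noncomputable def gdeg {V : Type*} (G : SimpleGraph V) (v : V) : ℕ :=
  (G.neighborSet v).ncard

/-- A graph is Hamilton-connected if every two distinct vertices are joined by a
Hamiltonian path. -/
def HamConnected {V : Type*} (G : SimpleGraph V) : Prop :=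
  ∀ u v : V, u ≠ v → ∃ p : G.Walk u v, p.IsHamiltonian

/-- The signless Laplacian matrix `Q(G) = D(G) + A(G)`. -/
noncomputable def signlessLap {V : Type*} [Fintype V] [DecidableEq V] (G : SimpleGraph V) :
    Matrix V V ℝ :=
  Matrix.of fun i j => (if i = j then (gdeg G i : ℝ) else 0) + (if G.Adj i j then 1 else 0)

/-- The signless Laplacian spectral radius: largest eigenvalue of `Q(G)`. -/
noncomputable def qrad {V : Type*} [Fintype V] [DecidableEq V] (G : SimpleGraph V) : ℝ :=
  sSup (spectrum ℝ (signlessLap G))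

/-- `S_n^k = K_k ∨ (K_{n-2k+1} + (k-1)K_1)`, realized on `Fin n`: vertices with value `< k`
form the dominating clique `K_k`, vertices with value `≤ n-k` form the clique `K_{n-k+1}`,
and the remaining `k-1` vertices are adjacent exactly to the first `k` vertices. -/
noncomputable def Sgraph (n k : ℕ) : SimpleGraph (Fin n) :=
  SimpleGraph.fromRel (fun i j => i.val < k ∨ (i.val ≤ n - k ∧ j.val ≤ n - k))

/-- `T_n^k = K_2 ∨ (K_{n-k-1} + K_{k-1})`, realized on `Fin n`: vertices with value `< 2`
are the dominating `K_2`, values `≤ n-k` form the clique `K_{n-k+1}`, and values `> n-k`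
(of which there are `k-1`) form a clique joined to the first two vertices. -/
noncomputable def Tgraph (n k : ℕ) : SimpleGraph (Fin n) :=
  SimpleGraph.fromRel (fun i j =>
    i.val < 2 ∨ (i.val ≤ n - k ∧ j.val ≤ n - k) ∨ (n - k < i.val ∧ n - k < j.val))

/-- Edges of `S_n^k` (resp. `T_n^k`) with both endpoints of degree `n-1` or `n-k`,
i.e. both endpoints with value `≤ n-k`. -/
def E0 {n : ℕ} (G : SimpleGraph (Fin n)) (k : ℕ) : Set (Sym2 (Fin n)) :=
  {e | e ∈ G.edgeSet ∧ ∀ i ∈ e, i.val ≤ n - k}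

/-- The family `𝒮_k^{(2)}(n)`. -/
def SFam2 (n k : ℕ) : Set (SimpleGraph (Fin n)) :=
  {G | ∃ E' : Set (Sym2 (Fin n)), E' ⊆ E0 (Sgraph n k) k ∧ E'.ncard = k * (k - 1) / 4 + 1 ∧
    G = (Sgraph n k).deleteEdges E'}

/-- The family `𝒯_k^{(2)}(n)`. -/
def TFam2 (n k : ℕ) : Set (SimpleGraph (Fin n)) :=
  {G | ∃ E' : Set (Sym2 (Fin n)), E' ⊆ E0 (Tgraph n k) k ∧ E'.ncard = (k - 1) / 2 + 1 ∧
    G = (Tgraph n k).deleteEdges E'}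

-- Auxiliary lemmas
lemma rayleigh_aux {m : ℕ} [NeZero m] (A : Matrix (Fin m) (Fin m) ℝ) (hA : A.IsHermitian)
    (x : Fin m → ℝ) :
    dotProduct x (A.mulVec x) ≤ sSup (spectrum ℝ A) * dotProduct x x := by
  classical
  set μ := sSup (spectrum ℝ A) with hμ
  have hev : ∀ i, hA.eigenvalues i ≤ μ := fun i =>
    le_csSup (Matrix.finite_real_spectrum).bddAbove (hA.eigenvalues_mem_spectrum_real i)
  set U : Matrix (Fin m) (Fin m) ℝ :=
    (Matrix.IsHermitian.eigenvectorUnitary hA : Matrix (Fin m) (Fin m) ℝ) with hUdef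
  have hU : U * star U = 1 := by
    have := (Unitary.mem_iff.mp (Matrix.IsHermitian.eigenvectorUnitary hA).prop).2
    simpa [hUdef] using this
  have hdiagsmul : ∀ c : ℝ,
      Matrix.diagonal (fun _ : Fin m => c) = c • (1 : Matrix (Fin m) (Fin m) ℝ) := by
    intro c; ext i j; by_cases h : i = j <;> simp [Matrix.diagonal_apply, Matrix.one_apply, h]
  have key : μ • (1 : Matrix (Fin m) (Fin m) ℝ) - A
      = U * Matrix.diagonal (fun i => μ - hA.eigenvalues i) * star U := by
    conv_lhs => rw [hA.spectral_theorem]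
    rw [Unitary.conjStarAlgAut_apply, ← hUdef]
    have h1 : (RCLike.ofReal ∘ hA.eigenvalues : Fin m → ℝ) = hA.eigenvalues := by
      funext i; simp
    rw [h1]
    have h2 : μ • (1 : Matrix (Fin m) (Fin m) ℝ) = U * Matrix.diagonal (fun _ => μ) * star U := by
      rw [hdiagsmul, Matrix.mul_smul, Matrix.smul_mul, mul_one, hU]
    rw [h2, ← Matrix.sub_mul, ← Matrix.mul_sub, ← Matrix.diagonal_sub]
  have hpsd : (μ • (1 : Matrix (Fin m) (Fin m) ℝ) - A).PosSemidef := by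
    rw [key, Matrix.star_eq_conjTranspose]
    exact (Matrix.posSemidef_diagonal_iff.mpr (fun i => by
      simpa using sub_nonneg.mpr (hev i))).mul_mul_conjTranspose_same U
  have h0 := hpsd.dotProduct_mulVec_nonneg x
  simp only [star_trivial, Matrix.sub_mulVec, Matrix.smul_mulVec, Matrix.one_mulVec,
    dotProduct_sub, dotProduct_smul, smul_eq_mul] at h0
  linarith

lemma signlessLap_isHermitian {V : Type*} [Fintype V] [DecidableEq V] (G : SimpleGraph V) :
    (signlessLap G).IsHermitian := by
  ext i j
  simp only [signlessLap, Matrix.conjTranspose_apply, Matrix.of_apply, star_trivial]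
  by_cases h : i = j
  · subst h; rfl
  · simp [h, Ne.symm h, SimpleGraph.adj_comm]

lemma card_filter_le_eq (n m : ℕ) (hm : m < n) :
    (Finset.univ.filter (fun i : Fin n => i.val ≤ m)).card = m + 1 := by
  rw [← Fintype.card_fin (m + 1), ← Finset.card_univ]
  apply Finset.card_bij
    (fun (a : Fin n) (ha : a ∈ Finset.univ.filter (fun i : Fin n => i.val ≤ m)) =>
      (⟨a.val, by simpa [Nat.lt_succ_iff] using (Finset.mem_filter.mp ha).2⟩ : Fin (m + 1)))
  · intro a ha; exact Finset.mem_univ _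
  · intro a ha b hb h
    have := congrArg Fin.val h; exact Fin.ext this
  · intro b _
    exact ⟨⟨b.val, lt_of_le_of_lt (Nat.lt_succ_iff.mp b.isLt) hm⟩,
      Finset.mem_filter.mpr ⟨Finset.mem_univ _, Nat.lt_succ_iff.mp b.isLt⟩, rfl⟩

lemma main_aux (n k : ℕ) (hk : 2 ≤ k) (hkn : k + 1 ≤ n)
    (B : SimpleGraph (Fin n))
    (hB : ∀ i j : Fin n, i ≠ j → i.val ≤ n - k → j.val ≤ n - k → B.Adj i j)
    (E' : Set (Sym2 (Fin n))) (hE0 : E' ⊆ E0 B k) (t : ℕ) (ht : E'.ncard = t)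
    (hts : 4 * t < n - k + 1) :
    2 * (n : ℝ) - 2 * k - 1 < qrad (B.deleteEdges E') := by
  classical
  set m := n - k with hm
  have hmn : m < n := by omega
  set G := B.deleteEdges E' with hGdef
  set S : Finset (Fin n) := Finset.univ.filter (fun i => i.val ≤ m) with hS
  have hScard : S.card = m + 1 := card_filter_le_eq n m hmn
  set H : SimpleGraph (Fin n) := SimpleGraph.fromEdgeSet E' with hH
  have hHadj : ∀ i j : Fin n, H.Adj i j ↔ s(i, j) ∈ E' ∧ i ≠ j := by
    intro i j; rw [hH, SimpleGraph.fromEdgeSet_adj]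
  have hE0mem : ∀ i j : Fin n, s(i, j) ∈ E' → i.val ≤ m ∧ j.val ≤ m := by
    intro i j hij
    have h2 := (hE0 hij).2
    exact ⟨h2 i (Sym2.mem_mk_left i j), h2 j (Sym2.mem_mk_right i j)⟩
  -- edge count of H
  have hES : H.edgeSet = E' := by
    rw [hH, SimpleGraph.edgeSet_fromEdgeSet]
    ext e
    simp only [Set.mem_diff, Set.mem_setOf_eq]
    exact ⟨fun h => h.1, fun h => ⟨h, SimpleGraph.not_isDiag_of_mem_edgeSet B (hE0 h).1⟩⟩
  -- per-vertex covering inequality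
  have hcover : ∀ i ∈ S, m ≤ (S.filter (fun j => G.Adj i j)).card + H.degree i := by
    intro i hi
    have hsub : S.erase i ⊆ S.filter (fun j => G.Adj i j) ∪ S.filter (fun j => H.Adj i j) := by
      intro j hj
      obtain ⟨hji, hjS⟩ := Finset.mem_erase.mp hj
      by_cases hmem : s(i, j) ∈ E'
      · exact Finset.mem_union_right _
          (Finset.mem_filter.mpr ⟨hjS, (hHadj i j).mpr ⟨hmem, Ne.symm hji⟩⟩)
      · refine Finset.mem_union_left _ (Finset.mem_filter.mpr ⟨hjS, ?_⟩)
        rw [hGdef, SimpleGraph.deleteEdges_adj]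
        exact ⟨hB i j (Ne.symm hji) (by simpa [hS] using hi) (by simpa [hS] using hjS), hmem⟩
    have h1 : (S.erase i).card = m := by
      rw [Finset.card_erase_of_mem hi, hScard]; omega
    have h2 := Finset.card_le_card hsub
    have h3 := Finset.card_union_le (S.filter (fun j => G.Adj i j))
      (S.filter (fun j => H.Adj i j))
    have h4 : (S.filter (fun j => H.Adj i j)).card ≤ H.degree i := by
      rw [SimpleGraph.degree]
      apply Finset.card_le_card
      intro j hj
      rw [SimpleGraph.mem_neighborFinset]
      exact (Finset.mem_filter.mp hj).2
    omega
  have hdeg : ∀ i : Fin n, (S.filter (fun j => G.Adj i j)).card ≤ gdeg G i := by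
    intro i
    rw [gdeg, ← Set.ncard_coe_finset]
    apply Set.ncard_le_ncard _ (Set.toFinite _)
    intro j hj
    simp only [Finset.coe_filter, Set.mem_setOf_eq] at hj
    exact hj.2
  have hHdegsum : ∑ i ∈ S, H.degree i ≤ 2 * t := by
    calc ∑ i ∈ S, H.degree i ≤ ∑ i, H.degree i :=
          Finset.sum_le_sum_of_subset (Finset.subset_univ _)
      _ = 2 * t := by
          rw [SimpleGraph.sum_degrees_eq_twice_card_edges]
          congr 1
          rw [← Set.ncard_coe_finset, SimpleGraph.coe_edgeFinset, hES, ht]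
  -- the test vector
  set x : Fin n → ℝ := fun i => if i ∈ S then 1 else 0 with hx
  have hxx : dotProduct x x = ((m + 1 : ℕ) : ℝ) := by
    rw [← hScard]
    simp only [dotProduct, hx, ite_mul, one_mul, zero_mul]
    rw [Finset.sum_ite_mem, Finset.univ_inter]
    simp
  set N : ℕ := ∑ i ∈ S, (gdeg G i + (S.filter (fun j => G.Adj i j)).card) with hN
  have hQx : dotProduct x ((signlessLap G).mulVec x) = (N : ℝ) := by
    have step1 : dotProduct x ((signlessLap G).mulVec x)
        = ∑ i ∈ S, ∑ j ∈ S, signlessLap G i j := by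
      simp only [dotProduct, Matrix.mulVec, dotProduct, hx, ite_mul, one_mul,
        zero_mul, mul_ite, mul_one, mul_zero]
      rw [Finset.sum_ite_mem, Finset.univ_inter]
      refine Finset.sum_congr rfl fun i hi => ?_
      rw [Finset.sum_ite_mem, Finset.univ_inter]
    rw [step1, hN]
    push_cast
    refine Finset.sum_congr rfl fun i hi => ?_
    simp only [signlessLap, Matrix.of_apply]
    rw [Finset.sum_add_distrib]
    congr 1
    · rw [Finset.sum_ite_eq S i (fun _ => (gdeg G i : ℝ)), if_pos hi]
    · simp [Finset.sum_boole]; congr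
  -- Rayleigh
  haveI : NeZero n := ⟨by omega⟩
  have hray := rayleigh_aux (signlessLap G) (signlessLap_isHermitian G) x
  rw [hQx, hxx] at hray
  -- numeric bookkeeping in ℕ
  have hsum1 : (m + 1) * m ≤ (∑ i ∈ S, (S.filter (fun j => G.Adj i j)).card)
      + ∑ i ∈ S, H.degree i := by
    calc (m + 1) * m = ∑ _i ∈ S, m := by rw [Finset.sum_const, hScard, smul_eq_mul]
      _ ≤ ∑ i ∈ S, ((S.filter (fun j => G.Adj i j)).card + H.degree i) :=
          Finset.sum_le_sum hcover
      _ = _ := Finset.sum_add_distrib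
  have hsum2 : 2 * (∑ i ∈ S, (S.filter (fun j => G.Adj i j)).card) ≤ N := by
    rw [hN, two_mul]
    rw [← Finset.sum_add_distrib]
    exact Finset.sum_le_sum fun i _ => Nat.add_le_add_right (hdeg i) _
  have hNge : 2 * ((m + 1) * m) ≤ N + 4 * t := by
    have := hHdegsum
    generalize (m + 1) * m = P at hsum1
    generalize (∑ i ∈ S, (S.filter (fun j => G.Adj i j)).card) = a at hsum1 hsum2
    generalize (∑ i ∈ S, H.degree i) = b at hsum1 this
    omega
  -- conclude over ℝ
  have hq : (N : ℝ) ≤ qrad G * ((m + 1 : ℕ) : ℝ) := hray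
  have hcast : 2 * (((m : ℝ) + 1) * m) ≤ (N : ℝ) + 4 * t := by exact_mod_cast hNge
  have ht4 : (4 * t : ℝ) < (m : ℝ) + 1 := by exact_mod_cast hts
  have hmr : (m : ℝ) = (n : ℝ) - k := by
    rw [hm, Nat.cast_sub (by omega)]
  have hgoal : 2 * (n : ℝ) - 2 * k - 1 = 2 * (m : ℝ) - 1 := by rw [hmr]; ring
  rw [hgoal]
  have hm1 : (0 : ℝ) < (m : ℝ) + 1 := by positivity
  have hqm : (N : ℝ) ≤ qrad G * ((m : ℝ) + 1) := by push_cast at hq ⊢; linarith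
  nlinarith [hq, hcast, ht4, hm1, hqm]

/-- **Claim 1 in Lemma 3.3.** For every `G ∈ 𝒮_k^{(2)}(n) ∪ 𝒯_k^{(2)}(n)` with
`n ≥ k⁴ + 5k³ + 2k² + 8k + 12` and `k ≥ 2`, `q(G) > 2n - 2k - 1`. -/
theorem qrad_gt_of_fam2 (n k : ℕ) (hk : 2 ≤ k)
    (hn : k ^ 4 + 5 * k ^ 3 + 2 * k ^ 2 + 8 * k + 12 ≤ n)
    (G : SimpleGraph (Fin n)) (hG : G ∈ SFam2 n k ∪ TFam2 n k) :
    2 * (n : ℝ) - 2 * k - 1 < qrad G := by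
  have hkn : k + 1 ≤ n := le_trans (by nlinarith) hn
  have hbig : k ^ 2 + k + 4 ≤ n := le_trans (by nlinarith) hn
  have hkk : k * (k - 1) ≤ k ^ 2 := by
    have : k - 1 ≤ k := Nat.sub_le _ _
    calc k * (k - 1) ≤ k * k := Nat.mul_le_mul_left _ this
      _ = k ^ 2 := (sq k).symm
  have h2k : 2 * k ≤ k ^ 2 := by
    calc 2 * k ≤ k * k := Nat.mul_le_mul_right _ hk
      _ = k ^ 2 := (sq k).symm
  rcases hG with hG | hG
  · obtain ⟨E', hsub, hcard, rfl⟩ := hG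
    refine main_aux n k hk hkn _ ?_ E' hsub _ hcard ?_
    · intro i j hij hi hj
      rw [Sgraph, SimpleGraph.fromRel_adj]
      exact ⟨hij, Or.inl (Or.inr ⟨hi, hj⟩)⟩
    · have hdiv : k * (k - 1) / 4 * 4 ≤ k * (k - 1) := Nat.div_mul_le_self _ _
      generalize hc1 : k * (k - 1) = c1 at hdiv hkk ⊢
      generalize hc2 : k ^ 2 = c2 at hkk hbig
      omega
  · obtain ⟨E', hsub, hcard, rfl⟩ := hG
    refine main_aux n k hk hkn _ ?_ E' hsub _ hcard ?_
    · intro i j hij hi hj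
      rw [Tgraph, SimpleGraph.fromRel_adj]
      exact ⟨hij, Or.inl (Or.inr (Or.inl ⟨hi, hj⟩))⟩
    · have hdiv : (k - 1) / 2 * 2 ≤ k - 1 := Nat.div_mul_le_self _ _
      generalize hc2 : k ^ 2 = c2 at hbig h2k
      omega

end
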